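/- Let (U_n : n ∈ ℤ₊) be a sequence of nonempty subsets of a compact metric space K. Suppose that for every ε > 0 there exists f(ε) ∈ ℤ₊ such that for every n ≥ f(ε) there exists f(n,ε) ∈ ℤ₊ with the property that for all m ≥ f(n,ε) we have U_n ⊆ U_m^ε (the ε-neighborhood of U_m). Then (U_n) is a Cauchy sequence in the Hausdorff distance. -/

import Mathlib

open Metric TopologicalSpace

/-- Let `(Uₙ)` be a sequence of nonempty subsets of a compact metric
space `K`. Suppose that for every `ε > 0` there exists `f(ε)` such that for every
`n ≥ f(ε)` there exists `f(n,ε)` with `Uₙ ⊆ Uₘ^ε` for all `m ≥ f(n,ε)`.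
Then `(Uₙ)` is Cauchy in the Hausdorff distance. -/
theorem stmt0 {K : Type*} [MetricSpace K] [CompactSpace K]
    (U : ℕ → Set K) (hne : ∀ n, (U n).Nonempty)
    (h : ∀ ε : ℝ, 0 < ε → ∃ f : ℕ, ∀ n, f ≤ n → ∃ g : ℕ, ∀ m, g ≤ m →
      U n ⊆ Metric.cthickening ε (U m)) :
    ∀ ε : ℝ, 0 < ε → ∃ N : ℕ, ∀ m, N ≤ m → ∀ n, N ≤ n →
      Metric.hausdorffDist (U m) (U n) ≤ ε := by
  -- basic boundedness facts
  have hb : ∀ s : Set K, Bornology.IsBounded s := fun s =>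
    isCompact_univ.isBounded.subset (Set.subset_univ s)
  have hfin : ∀ s t : Set K, s.Nonempty → t.Nonempty → EMetric.hausdorffEdist s t ≠ ⊤ :=
    fun s t hs ht => hausdorffEdist_ne_top_of_nonempty_of_bounded hs ht (hb s) (hb t)
  -- points in a cthickening are at small infDist
  have hcth : ∀ (δ : ℝ), 0 ≤ δ → ∀ (s : Set K) (x : K), x ∈ cthickening δ s →
      infDist x s ≤ δ := by
    intro δ hδ s x hx
    rw [mem_cthickening_iff] at hx
    have := ENNReal.toReal_mono (by simp) hx
    rwa [ENNReal.toReal_ofReal hδ] at this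
  intro ε hε
  set δ : ℝ := ε / 8 with hδdef
  have hδ : 0 < δ := by positivity
  obtain ⟨f, hf⟩ := h δ hδ
  -- the sequence of closures in the hyperspace of nonempty compacts
  set V : ℕ → NonemptyCompacts K := fun n =>
    ⟨⟨closure (U n), isClosed_closure.isCompact⟩, (hne n).closure⟩ with hV
  obtain ⟨A, -, φ, hφ, hlim⟩ :=
    isCompact_univ.tendsto_subseq (x := V) (fun n => Set.mem_univ _)
  have hA : (A : Set K).Nonempty := A.nonempty
  -- distance to the limit is eventually small
  rw [Metric.tendsto_atTop] at hlim
  obtain ⟨k₀, hk₀⟩ := hlim δ hδ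
  have hdistA : ∀ k, k₀ ≤ k → hausdorffDist (U (φ k)) (A : Set K) ≤ δ := by
    intro k hk
    have h1 := (hk₀ k hk).le
    rw [Function.comp_apply, NonemptyCompacts.dist_eq] at h1
    rw [← hausdorffDist_closure₁ (s := U (φ k))]
    exact h1
  -- choose a reference subsequence index
  set n₀ : ℕ := φ (max k₀ f) with hn₀
  have hn₀f : f ≤ n₀ := le_trans (le_max_right _ _) (hφ.le_apply)
  have hn₀A : hausdorffDist (U n₀) (A : Set K) ≤ δ := hdistA _ (le_max_left _ _)
  obtain ⟨g, hg⟩ := hf n₀ hn₀f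
  refine ⟨max f g, ?_⟩
  -- main claim : every far enough set is ε/2-close to A
  have claim : ∀ m, max f g ≤ m → hausdorffDist (U m) (A : Set K) ≤ ε / 2 := by
    intro m hm
    have hmf : f ≤ m := le_trans (le_max_left _ _) hm
    have hmg : g ≤ m := le_trans (le_max_right _ _) hm
    obtain ⟨gm, hgm⟩ := hf m hmf
    -- pick a subsequence index beyond both k₀ and gm
    obtain ⟨k, hk1, hk2⟩ : ∃ k, k₀ ≤ k ∧ gm ≤ φ k :=
      ⟨max k₀ gm, le_max_left _ _, le_trans (le_max_right _ _) hφ.le_apply⟩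
    refine hausdorffDist_le_of_infDist (by positivity) ?_ ?_
    · -- U m ⊆ small neighborhood of A
      intro x hx
      have hx1 : infDist x (U (φ k)) ≤ δ :=
        hcth δ hδ.le _ _ (hgm (φ k) hk2 hx)
      have hx2 : infDist x (A : Set K) ≤ infDist x (U (φ k)) + hausdorffDist (U (φ k)) A :=
        infDist_le_infDist_add_hausdorffDist (hfin _ _ (hne _) hA)
      have h5 := hdistA k hk1
      have h6 : infDist x (A : Set K) ≤ δ + δ := by linarith
      rw [hδdef] at h6; linarith
    · -- A ⊆ small neighborhood of U m
      intro y hy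
      have hy1 : infDist y (U n₀) ≤ δ := by
        have h0 : infDist y (A : Set K) = 0 := infDist_zero_of_mem hy
        have hft : EMetric.hausdorffEdist (A : Set K) (U n₀) ≠ ⊤ := by
          show Metric.hausdorffEDist (A : Set K) (U n₀) ≠ ⊤
          rw [EMetric.hausdorffEdist_comm]; exact hfin _ _ (hne _) hA
        have h2 := infDist_le_infDist_add_hausdorffDist (x := y)
          (s := (A : Set K)) (t := U n₀) hft
        rw [h0, zero_add, hausdorffDist_comm] at h2
        linarith
      obtain ⟨z, hz, hzy⟩ : ∃ z ∈ U n₀, dist y z < δ + δ :=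
        (infDist_lt_iff (hne n₀)).mp (by linarith)
      have hz1 : infDist z (U m) ≤ δ := hcth δ hδ.le _ _ (hg m hmg hz)
      have h3 : infDist y (U m) ≤ infDist z (U m) + dist y z :=
        infDist_le_infDist_add_dist
      have h4 : infDist y (U m) ≤ δ + (δ + δ) := by linarith
      rw [hδdef] at h4; linarith
  intro m hm n hn
  have h1 := claim m hm
  have h2 := claim n hn
  have htri : hausdorffDist (U m) (U n) ≤
      hausdorffDist (U m) (A : Set K) + hausdorffDist (A : Set K) (U n) :=
    hausdorffDist_triangle (hfin _ _ (hne _) hA)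
  rw [hausdorffDist_comm (s := (A : Set K)) (t := U n)] at htri
  linarith
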